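/- Define g(x) = (γ‖y‖²)/(2(1+γ)) + (λ/2)·xᵀ(I − ΦᵀΦ/‖Φ‖²_{2→2})x + ((1+γ)/2)·‖(|Φx| − y/(1+γ))₊‖², where (v)₊ is the componentwise positive part. Then g is convex on ℝⁿ. -/

import Mathlib

open Matrix

/-- The ℓ₂ → ℓ₂ operator norm of a real matrix. -/
noncomputable def matrixOpNorm {m n : ℕ} (A : Matrix (Fin m) (Fin n) ℝ) : ℝ :=
  ‖LinearMap.toContinuousLinearMap (Matrix.toEuclideanLin A)‖

lemma abs_convexOn : ConvexOn ℝ Set.univ (fun u : ℝ => |u|) :=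
  ⟨convex_univ, fun x _ y _ a b ha hb _ => by
    calc |a • x + b • y| ≤ |a • x| + |b • y| := abs_add_le _ _
    _ = a • |x| + b • |y| := by
        simp [smul_eq_mul, abs_mul, abs_of_nonneg ha, abs_of_nonneg hb]⟩

lemma psi_convexOn (c : ℝ) :
    ConvexOn ℝ Set.univ (fun u : ℝ => (max (|u| - c) 0)^2) := by
  have h1 : ConvexOn ℝ Set.univ (fun u : ℝ => |u| - c) := by
    have := abs_convexOn.add (convexOn_const (-c) convex_univ)
    simpa [sub_eq_add_neg, Pi.add_def] using this
  have h2 : ConvexOn ℝ Set.univ (fun u : ℝ => max (|u| - c) 0) := by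
    have := h1.sup (convexOn_const (0:ℝ) convex_univ)
    simpa [Pi.sup_def] using this
  have h3 := h2.pow (fun u _ => le_max_right _ _) 2
  simpa [Pi.pow_def] using h3

lemma quad_convexOn {n : ℕ} (A : Matrix (Fin n) (Fin n) ℝ) (hA : Aᵀ = A)
    (hq : ∀ v, 0 ≤ v ⬝ᵥ A.mulVec v) :
    ConvexOn ℝ Set.univ (fun x : Fin n → ℝ => x ⬝ᵥ A.mulVec x) := by
  refine ⟨convex_univ, fun x _ y _ a b ha hb hab => ?_⟩
  have hsym : y ⬝ᵥ A.mulVec x = x ⬝ᵥ A.mulVec y := by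
    rw [dotProduct_mulVec, ← hA, vecMul_transpose, hA, dotProduct_comm]
  have hq' := hq (x - y)
  have hexp : (x - y) ⬝ᵥ A.mulVec (x - y) =
      x ⬝ᵥ A.mulVec x - 2 * (x ⬝ᵥ A.mulVec y) + y ⬝ᵥ A.mulVec y := by
    simp [sub_dotProduct, dotProduct_sub, mulVec_sub, hsym]; ring
  rw [hexp] at hq'
  have hmain : (a • x + b • y) ⬝ᵥ A.mulVec (a • x + b • y) =
      a^2 * (x ⬝ᵥ A.mulVec x) + 2*a*b*(x ⬝ᵥ A.mulVec y) + b^2 * (y ⬝ᵥ A.mulVec y) := by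
    simp [add_dotProduct, dotProduct_add, mulVec_add, mulVec_smul,
      smul_dotProduct, dotProduct_smul, smul_eq_mul, hsym]; ring
  simp only [smul_eq_mul]
  rw [hmain]
  have hb1 : b = 1 - a := by linarith
  subst hb1
  nlinarith [mul_nonneg (mul_nonneg ha hb) hq']

lemma mulVec_sq_sum_le {m n : ℕ} (Φ : Matrix (Fin m) (Fin n) ℝ) (v : Fin n → ℝ) :
    ∑ i, (Φ.mulVec v i)^2 ≤ (matrixOpNorm Φ)^2 * ∑ j, (v j)^2 := by
  set L := LinearMap.toContinuousLinearMap (Matrix.toEuclideanLin Φ) with hL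
  set v' : EuclideanSpace ℝ (Fin n) := (WithLp.equiv 2 (Fin n → ℝ)).symm v with hv'
  have h := L.le_opNorm v'
  have h1 : ‖L v'‖ = Real.sqrt (∑ i, (Φ.mulVec v i)^2) := by
    have : L v' = (WithLp.equiv 2 (Fin m → ℝ)).symm (Φ.mulVec v) := rfl
    rw [this, EuclideanSpace.norm_eq]
    simp [Real.norm_eq_abs, sq_abs]
  have h2 : ‖v'‖ = Real.sqrt (∑ j, (v j)^2) := by
    rw [EuclideanSpace.norm_eq]
    simp [Real.norm_eq_abs, sq_abs, hv', WithLp.equiv_symm_apply]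
  rw [h1, h2] at h
  have hs1 : (0:ℝ) ≤ ∑ i, (Φ.mulVec v i)^2 := Finset.sum_nonneg fun i _ => sq_nonneg _
  have hs2 : (0:ℝ) ≤ ∑ j, (v j)^2 := Finset.sum_nonneg fun j _ => sq_nonneg _
  have hN : (0:ℝ) ≤ matrixOpNorm Φ := norm_nonneg _
  calc ∑ i, (Φ.mulVec v i)^2 = Real.sqrt (∑ i, (Φ.mulVec v i)^2) ^ 2 := (Real.sq_sqrt hs1).symm
    _ ≤ (matrixOpNorm Φ * Real.sqrt (∑ j, (v j)^2))^2 := by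
        apply sq_le_sq' _ h
        have := Real.sqrt_nonneg (∑ i, (Φ.mulVec v i)^2)
        nlinarith [Real.sqrt_nonneg (∑ j, (v j)^2)]
    _ = (matrixOpNorm Φ)^2 * ∑ j, (v j)^2 := by
        rw [mul_pow, Real.sq_sqrt hs2]

lemma psd {m n : ℕ} (Φ : Matrix (Fin m) (Fin n) ℝ) (hΦ : 0 < matrixOpNorm Φ)
    (v : Fin n → ℝ) :
    0 ≤ v ⬝ᵥ ((1 - ((matrixOpNorm Φ)^2)⁻¹ • (Φᵀ * Φ)).mulVec v) := by
  have hexp : v ⬝ᵥ ((1 - ((matrixOpNorm Φ)^2)⁻¹ • (Φᵀ * Φ)).mulVec v)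
      = v ⬝ᵥ v - ((matrixOpNorm Φ)^2)⁻¹ * ((Φ.mulVec v) ⬝ᵥ (Φ.mulVec v)) := by
    rw [sub_mulVec, dotProduct_sub, one_mulVec, smul_mulVec, dotProduct_smul,
      smul_eq_mul, ← mulVec_mulVec, dotProduct_mulVec, vecMul_transpose]
  rw [hexp]
  have hkey := mulVec_sq_sum_le Φ v
  have hvv : v ⬝ᵥ v = ∑ j, (v j)^2 := by simp [dotProduct, sq]
  have hww : (Φ.mulVec v) ⬝ᵥ (Φ.mulVec v) = ∑ i, (Φ.mulVec v i)^2 := by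
    simp [dotProduct, sq]
  rw [hvv, hww]
  have hN2 : (0:ℝ) < (matrixOpNorm Φ)^2 := by positivity
  rw [sub_nonneg, inv_mul_le_iff₀ hN2]
  linarith [hkey]

lemma sum_convexOn {ι E : Type*} [AddCommGroup E] [Module ℝ E] (t : Finset ι)
    (f : ι → E → ℝ) (h : ∀ i ∈ t, ConvexOn ℝ Set.univ (f i)) :
    ConvexOn ℝ Set.univ fun x => ∑ i ∈ t, f i x := by
  classical
  induction t using Finset.cons_induction with
  | empty => simpa using convexOn_const (0:ℝ) convex_univ
  | cons i t hi ih =>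
      simp only [Finset.sum_cons]
      exact (h i (Finset.mem_cons_self _ _)).add (ih fun j hj => h j (Finset.mem_cons_of_mem hj))

/-- The function
`g(x) = γ‖y‖²/(2(1+γ)) + (λ/2)·xᵀ(I − ΦᵀΦ/‖Φ‖²)x
       + ((1+γ)/2)·‖(|Φx| − y/(1+γ))₊‖²`
is convex on ℝⁿ. -/
theorem phase_retrieval_envelope_convex
    {m n : ℕ} (Φ : Matrix (Fin m) (Fin n) ℝ) (y : Fin m → ℝ)
    (hy : ∀ i, 0 ≤ y i) (lam : ℝ) (hlam : 0 < lam)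
    (hΦ : 0 < matrixOpNorm Φ)
    (γ : ℝ) (hγ : γ = lam / (matrixOpNorm Φ)^2)
    (g : (Fin n → ℝ) → ℝ)
    (hg : ∀ x, g x = γ * (∑ i, (y i)^2) / (2 * (1 + γ)) +
      (lam/2) * (x ⬝ᵥ ((1 - ((matrixOpNorm Φ)^2)⁻¹ • (Φᵀ * Φ)).mulVec x)) +
      ((1 + γ)/2) * ∑ i, (max (|Φ.mulVec x i| - y i / (1 + γ)) 0)^2) :
    ConvexOn ℝ Set.univ g := by
  have hγpos : 0 < γ := by
    rw [hγ]; positivity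
  -- constant part
  have hconst : ConvexOn ℝ Set.univ
      (fun _ : Fin n → ℝ => γ * (∑ i, (y i)^2) / (2 * (1 + γ))) :=
    convexOn_const _ convex_univ
  -- quadratic part
  have hAsym : (1 - ((matrixOpNorm Φ)^2)⁻¹ • (Φᵀ * Φ))ᵀ
      = 1 - ((matrixOpNorm Φ)^2)⁻¹ • (Φᵀ * Φ) := by
    rw [transpose_sub, transpose_one, transpose_smul, transpose_mul, transpose_transpose]
  have hquad0 := quad_convexOn _ hAsym (psd Φ hΦ)
  have hquad : ConvexOn ℝ Set.univ (fun x : Fin n → ℝ =>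
      (lam/2) * (x ⬝ᵥ ((1 - ((matrixOpNorm Φ)^2)⁻¹ • (Φᵀ * Φ)).mulVec x))) := by
    have := hquad0.smul (c := lam/2) (by positivity)
    simpa [smul_eq_mul] using this
  -- sum part
  have hsum0 : ConvexOn ℝ Set.univ (fun x : Fin n → ℝ =>
      ∑ i, (max (|Φ.mulVec x i| - y i / (1 + γ)) 0)^2) := by
    apply sum_convexOn
    intro i _
    have hψ := psi_convexOn (y i / (1 + γ))
    have hL := hψ.comp_linearMap ((LinearMap.proj i).comp (Matrix.mulVecLin Φ))
    simpa [Function.comp_def, Function.eval, Matrix.mulVecLin_apply] using hL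
  have hsum : ConvexOn ℝ Set.univ (fun x : Fin n → ℝ =>
      ((1 + γ)/2) * ∑ i, (max (|Φ.mulVec x i| - y i / (1 + γ)) 0)^2) := by
    have := hsum0.smul (c := (1 + γ)/2) (by positivity)
    simpa [smul_eq_mul] using this
  have htotal := (hconst.add hquad).add hsum
  have hgeq : g = fun x => γ * (∑ i, (y i)^2) / (2 * (1 + γ)) +
      (lam/2) * (x ⬝ᵥ ((1 - ((matrixOpNorm Φ)^2)⁻¹ • (Φᵀ * Φ)).mulVec x)) +
      ((1 + γ)/2) * ∑ i, (max (|Φ.mulVec x i| - y i / (1 + γ)) 0)^2 := funext hg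
  rw [hgeq]
  exact htotal
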